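/- For any hypermap M, the genus g = c - χ/2 is a nonnegative integer, where c is the number of connected components of M and χ = v + e + f - d its Euler characteristic. -/

import Mathlib

open Equiv

/-- The setoid on darts given by the cycle (orbit) relation of a permutation. -/
def cycleSetoid {D : Type*} (f : Perm D) : Setoid D :=
  ⟨f.SameCycle, ⟨fun x => Perm.SameCycle.refl f x, Perm.SameCycle.symm, Perm.SameCycle.trans⟩⟩

/-- Number of orbits (cycles) of a permutation. -/
noncomputable def numCycles {D : Type*} (f : Perm D) : ℕ :=
  Nat.card (Quotient (cycleSetoid f))

/-- The face permutation φ = α₁⁻¹ ∘ α₀⁻¹. -/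
def facePerm {D : Type*} (a0 a1 : Perm D) : Perm D := (a0⁻¹).trans (a1⁻¹)

/-- Number of connected components: orbits of the subgroup generated by α₀ and α₁. -/
noncomputable def numComponents {D : Type*} (a0 a1 : Perm D) : ℕ :=
  Nat.card (MulAction.orbitRel.Quotient (Subgroup.closure {a0, a1}) D)

/-- Euler characteristic χ = v + e + f - d. -/
noncomputable def eulerChar (D : Type*) [Fintype D] (a0 a1 : Perm D) : ℤ :=
  (numCycles a1 : ℤ) + numCycles a0 + numCycles (facePerm a0 a1) - Fintype.card D


/-- Genus g = c - χ/2 (integer division). -/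
noncomputable def genusZ (D : Type*) [Fintype D] (a0 a1 : Perm D) : ℤ :=
  (numComponents a0 a1 : ℤ) - eulerChar D a0 a1 / 2

/-- Planarity: genus zero. -/
def PlanarH (D : Type*) [Fintype D] (a0 a1 : Perm D) : Prop := genusZ D a0 a1 = 0

/-! ### Auxiliary machinery -/

section Aux

variable {D : Type*}

private lemma ssymm {s : Setoid D} {a b : D} (h : s a b) : s b a := s.iseqv.symm h
private lemma strans {s : Setoid D} {a b c : D} (h : s a b) (h' : s b c) : s a c :=
  s.iseqv.trans h h'

/-- The setoid obtained from `s` by additionally identifying `x` and `y`. -/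
def extS (s : Setoid D) (x y : D) : Setoid D where
  r a b := s a b ∨ (s a x ∧ s y b) ∨ (s a y ∧ s x b)
  iseqv := by
    constructor
    · exact fun a => Or.inl (s.refl a)
    · rintro a b (h | ⟨h1, h2⟩ | ⟨h1, h2⟩)
      · exact Or.inl (s.symm h)
      · exact Or.inr (Or.inr ⟨s.symm h2, s.symm h1⟩)
      · exact Or.inr (Or.inl ⟨s.symm h2, s.symm h1⟩)
    · rintro a b c (h | ⟨h1, h2⟩ | ⟨h1, h2⟩) (h' | ⟨h1', h2'⟩ | ⟨h1', h2'⟩)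
      · exact Or.inl (s.trans h h')
      · exact Or.inr (Or.inl ⟨s.trans h h1', h2'⟩)
      · exact Or.inr (Or.inr ⟨s.trans h h1', h2'⟩)
      · exact Or.inr (Or.inl ⟨h1, s.trans h2 h'⟩)
      · exact Or.inl (s.trans h1 (s.trans (s.symm (s.trans h2 h1')) h2'))
      · exact Or.inl (s.trans h1 h2')
      · exact Or.inr (Or.inr ⟨h1, s.trans h2 h'⟩)
      · exact Or.inl (s.trans h1 h2')
      · exact Or.inl (s.trans h1 (s.trans (s.symm (s.trans h2 h1')) h2'))

lemma extS_rel_pair (s : Setoid D) (x y : D) : extS s x y x y :=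
  Or.inr (Or.inl ⟨s.refl x, s.refl y⟩)

lemma extS_of_rel {s : Setoid D} {x y : D} (h : s x y) : extS s x y = s := by
  apply Setoid.ext; intro a b
  constructor
  · rintro (h' | ⟨h1, h2⟩ | ⟨h1, h2⟩)
    · exact h'
    · exact s.trans h1 (s.trans h h2)
    · exact s.trans h1 (s.trans (s.symm h) h2)
  · exact Or.inl

open Classical in
noncomputable def extEquiv (s : Setoid D) (x y : D) (h : ¬ s x y) :
    Quotient (extS s x y) ≃ {z : Quotient s // z ≠ ⟦y⟧} where
  toFun := Quotient.lift
    (fun a => if hay : s a y then ⟨⟦x⟧, by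
        intro he
        exact h (Quotient.exact he)⟩
      else ⟨⟦a⟧, fun he => hay (Quotient.exact he)⟩)
    (by
      rintro a b (hab | ⟨h1, h2⟩ | ⟨h1, h2⟩)
      · by_cases hay : s a y
        · have hby : s b y := strans (ssymm hab) hay
          simp [hay, hby]
        · have hby : ¬ s b y := fun hby => hay (strans hab hby)
          simp only [hay, hby, dite_false]
          exact Subtype.ext (Quotient.sound hab)
      · have hay : ¬ s a y := fun hay => h (strans (ssymm h1) hay)
        have hby : s b y := ssymm h2
        simp only [hay, hby, dite_true, dite_false]
        exact Subtype.ext (Quotient.sound h1)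
      · have hay : s a y := h1
        have hby : ¬ s b y := fun hby => h (strans h2 hby)
        simp only [hay, hby, dite_true, dite_false]
        exact Subtype.ext (Quotient.sound h2))
  invFun z := Quotient.lift (fun a => (⟦a⟧ : Quotient (extS s x y)))
    (fun a b hab => Quotient.sound (Or.inl hab)) z.1
  left_inv := by
    refine Quotient.ind fun a => ?_
    by_cases hay : s a y
    · simp only [Quotient.lift_mk, hay, dite_true]
      exact Quotient.sound (Or.inr (Or.inl ⟨s.refl x, ssymm hay⟩) : extS s x y x a)
    · simp [hay]
  right_inv := by
    rintro ⟨z, hz⟩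
    obtain ⟨a, rfl⟩ := Quotient.exists_rep z
    have ha := hz
    have hay : ¬ s a y := fun hay => ha (Quotient.sound hay)
    simp [hay]

lemma card_quot_extS_add_one [Finite D] (s : Setoid D) {x y : D} (h : ¬ s x y) :
    Nat.card (Quotient (extS s x y)) + 1 = Nat.card (Quotient s) := by
  classical
  have := Fintype.ofFinite D
  have : Fintype (Quotient s) := Quotient.fintype s
  rw [Nat.card_congr (extEquiv s x y h)]
  rw [Nat.card_eq_fintype_card, Nat.card_eq_fintype_card]
  have h1 : Fintype.card {z : Quotient s // z ≠ ⟦y⟧} =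
      Fintype.card (Quotient s) - Fintype.card {z : Quotient s // z = ⟦y⟧} := by
    simpa using (Fintype.card_subtype_compl (fun z : Quotient s => z = ⟦y⟧))
  rw [h1, Fintype.card_subtype_eq]
  have : 0 < Fintype.card (Quotient s) := Fintype.card_pos_iff.mpr ⟨⟦y⟧⟩
  omega

/-- The subgroup of permutations `g` such that `g a` is related to `a` for every `a`. -/
def invSub (e : Setoid D) : Subgroup (Perm D) where
  carrier := {g | ∀ a, e (g a) a}
  one_mem' := fun a => e.refl a
  mul_mem' := by
    intro g h hg hh a
    exact e.trans (hg (h a)) (hh a)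
  inv_mem' := by
    intro g hg a
    have := hg (g⁻¹ a)
    rw [← Perm.mul_apply, mul_inv_cancel, Perm.one_apply] at this
    exact e.iseqv.symm this

lemma invSub_rel {e : Setoid D} {g : Perm D} (hg : g ∈ invSub e) (a : D) : e (g a) a := hg a

lemma mem_invSub_iff {e : Setoid D} {g : Perm D} : g ∈ invSub e ↔ ∀ a, e (g a) a := Iff.rfl

lemma sameCycle_rel {e : Setoid D} {σ : Perm D} (hσ : σ ∈ invSub e) {a b : D}
    (h : σ.SameCycle a b) : e a b := by
  obtain ⟨i, rfl⟩ := h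
  exact e.iseqv.symm (invSub_rel (Subgroup.zpow_mem _ hσ i) a)

lemma zpow_reduce (g : Perm D) {x : D} {k : ℕ} (hk : 0 < k) (hfix : (g ^ k) x = x) (i : ℤ) :
    ∃ j : ℕ, j < k ∧ (g ^ i) x = (g ^ j) x := by
  have hkz : (0:ℤ) < (k:ℤ) := by exact_mod_cast hk
  refine ⟨(i % k).toNat, ?_, ?_⟩
  · have := Int.emod_lt_of_pos i hkz
    omega
  · have hfix' : ((g ^ (k:ℤ)) ^ (i / k)) x = x := by
      have : (g ^ (k:ℤ)) = g ^ k := zpow_natCast g k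
      rw [this]
      exact Function.IsFixedPt.perm_zpow hfix (i / k)
    have hdecomp : g ^ i = g ^ (i % k) * g ^ ((k:ℤ) * (i / k)) := by
      rw [← zpow_add, Int.emod_add_mul_ediv]
    have h2 : (g ^ ((k:ℤ) * (i / k))) x = x := by
      rw [zpow_mul]; exact hfix'
    have h3 : (g ^ (i % k)) = g ^ ((i % k).toNat) := by
      rw [← zpow_natCast]
      congr 1
      have := Int.emod_nonneg i (by omega : (k:ℤ) ≠ 0)
      omega
    rw [hdecomp, Perm.mul_apply, h2, h3]

lemma aux_pow_eq [DecidableEq D] (σ : Perm D) {x y : D} {k : ℕ}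
    (hk : ∀ j, 0 < j → j < k → (σ ^ j) x ≠ x ∧ (σ ^ j) x ≠ y) :
    ∀ j < k, ((swap x y * σ) ^ j) x = (σ ^ j) x := by
  intro j hj
  induction j with
  | zero => simp
  | succ n ih =>
    have hn := ih (by omega)
    have hne := hk (n+1) (by omega) hj
    rw [pow_succ', Perm.mul_apply, hn, Perm.mul_apply, ← Perm.mul_apply σ, ← pow_succ',
      swap_apply_of_ne_of_ne hne.1 hne.2]

lemma sameCycle_swap_mul_iff [Fintype D] [DecidableEq D] (σ : Perm D) {x y : D} (hxy : x ≠ y) :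
    σ.SameCycle x y ↔ ¬ (swap x y * σ).SameCycle x y := by
  constructor
  · intro h hcon
    have hex : ∃ i : ℕ, 0 < i ∧ (σ ^ i) x = y := by
      obtain ⟨i, hi, hiy⟩ := h.exists_pow_eq'
      rcases Nat.eq_zero_or_pos i with rfl | hpos
      · exact absurd (by simpa using hiy) hxy
      · exact ⟨i, hpos, hiy⟩
    classical
    let k := Nat.find hex
    obtain ⟨hkpos, hky⟩ : 0 < k ∧ (σ ^ k) x = y := Nat.find_spec hex
    have hmin : ∀ j, 0 < j → j < k → (σ ^ j) x ≠ x ∧ (σ ^ j) x ≠ y := by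
      intro j hj hjk
      constructor
      · intro hx
        have h2 : (σ ^ (k - j)) x = y := by
          have : σ ^ k = σ ^ (k - j) * σ ^ j := by
            rw [← pow_add]; congr 1; omega
          rw [this, Perm.mul_apply, hx] at hky
          exact hky
        exact Nat.find_min hex (by omega : k - j < k) ⟨by omega, h2⟩
      · intro hy
        exact Nat.find_min hex hjk ⟨hj, hy⟩
    have haux := aux_pow_eq σ hmin
    have hper : ((swap x y * σ) ^ k) x = x := by
      have h1 : ((swap x y * σ) ^ (k-1)) x = (σ ^ (k-1)) x := haux (k-1) (by omega)
      have h2 : (swap x y * σ) ^ k = (swap x y * σ) * (swap x y * σ) ^ (k-1) := by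
        rw [← pow_succ']; congr 1; omega
      have h3 : σ ^ k = σ * σ ^ (k-1) := by rw [← pow_succ']; congr 1; omega
      rw [h2, Perm.mul_apply, h1, Perm.mul_apply, ← Perm.mul_apply σ, ← h3, hky,
        swap_apply_right]
    obtain ⟨i, hi⟩ := hcon
    obtain ⟨j, hjk, hj⟩ := zpow_reduce _ hkpos hper i
    rw [hi] at hj
    rcases Nat.eq_zero_or_pos j with rfl | hjpos
    · exact hxy (by simpa using hj.symm)
    · exact (hmin j hjpos hjk).2 ((haux j hjk).symm.trans hj.symm)
  · intro h
    by_contra hne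
    apply h
    have hex : ∃ i : ℕ, 0 < i ∧ (σ ^ i) x = x :=
      ⟨orderOf σ, orderOf_pos σ, by rw [pow_orderOf_eq_one]; rfl⟩
    classical
    let m := Nat.find hex
    obtain ⟨hmpos, hmx⟩ : 0 < m ∧ (σ ^ m) x = x := Nat.find_spec hex
    have hmin : ∀ j, 0 < j → j < m → (σ ^ j) x ≠ x ∧ (σ ^ j) x ≠ y := by
      intro j hj hjm
      refine ⟨fun hx => Nat.find_min hex hjm ⟨hj, hx⟩, fun hy => hne ⟨(j:ℤ), by
        rw [zpow_natCast]; exact hy⟩⟩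
    have haux := aux_pow_eq σ hmin
    refine ⟨(m:ℤ), ?_⟩
    have h1 : ((swap x y * σ) ^ (m-1)) x = (σ ^ (m-1)) x := haux (m-1) (by omega)
    have h2 : (swap x y * σ) ^ m = (swap x y * σ) * (swap x y * σ) ^ (m-1) := by
      rw [← pow_succ']; congr 1; omega
    have h3 : σ ^ m = σ * σ ^ (m-1) := by rw [← pow_succ']; congr 1; omega
    rw [zpow_natCast, h2, Perm.mul_apply, h1, Perm.mul_apply, ← Perm.mul_apply σ, ← h3, hmx,
      swap_apply_left]

lemma extS_le {s t : Setoid D} {x y : D}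
    (hst : ∀ a b, s a b → extS t x y a b) :
    ∀ a b, extS s x y a b → extS t x y a b := by
  intro a b h
  set e := extS t x y with he
  have pair : e x y := extS_rel_pair t x y
  rcases h with h | ⟨h1, h2⟩ | ⟨h1, h2⟩
  · exact hst a b h
  · exact e.trans (hst _ _ h1) (e.trans pair (hst _ _ h2))
  · exact e.trans (hst _ _ h1) (e.trans (e.iseqv.symm pair) (hst _ _ h2))

lemma extS_eq_of_le {s t : Setoid D} {x y : D}
    (hst : ∀ a b, s a b → extS t x y a b) (hts : ∀ a b, t a b → extS s x y a b) :
    extS s x y = extS t x y :=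
  Setoid.ext fun a b => ⟨extS_le hst a b, extS_le hts a b⟩

lemma mem_invSub_ext [DecidableEq D] (σ : Perm D) (x y : D) :
    σ ∈ invSub (extS (cycleSetoid (swap x y * σ)) x y) := by
  rw [mem_invSub_iff]
  intro a
  set s' := cycleSetoid (swap x y * σ) with hs'
  have hbase : (swap x y * σ).SameCycle a ((swap x y) (σ a)) := ⟨1, by simp⟩
  by_cases h1 : σ a = x
  · rw [h1] at hbase ⊢
    rw [swap_apply_left] at hbase
    exact Or.inr (Or.inl ⟨s'.refl x, s'.iseqv.symm (hbase : s' _ _)⟩)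
  · by_cases h2 : σ a = y
    · rw [h2] at hbase ⊢
      rw [swap_apply_right] at hbase
      exact Or.inr (Or.inr ⟨s'.refl y, s'.iseqv.symm (hbase : s' _ _)⟩)
    · rw [swap_apply_of_ne_of_ne h1 h2] at hbase
      exact Or.inl (s'.iseqv.symm (hbase : s' _ _))

lemma extS_cycle_eq [DecidableEq D] (σ : Perm D) (x y : D) :
    extS (cycleSetoid σ) x y = extS (cycleSetoid (swap x y * σ)) x y := by
  refine extS_eq_of_le (fun a b h => ?_) (fun a b h => ?_)
  · exact sameCycle_rel (mem_invSub_ext σ x y) h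
  · have := mem_invSub_ext (swap x y * σ) x y
    rw [swap_mul_self_mul] at this
    exact sameCycle_rel this h

lemma numCycles_swap_mul_of_sameCycle [Fintype D] [DecidableEq D] (σ : Perm D) {x y : D}
    (hxy : x ≠ y) (h : σ.SameCycle x y) :
    numCycles (swap x y * σ) = numCycles σ + 1 := by
  have h' : ¬ (swap x y * σ).SameCycle x y := (sameCycle_swap_mul_iff σ hxy).mp h
  have e1 : extS (cycleSetoid σ) x y = cycleSetoid σ := extS_of_rel (h : cycleSetoid σ x y)
  have e2 := card_quot_extS_add_one (cycleSetoid (swap x y * σ))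
    (h' : ¬ cycleSetoid (swap x y * σ) x y)
  have e3 := extS_cycle_eq σ x y
  rw [e1] at e3
  unfold numCycles
  rw [← e2, ← e3]

lemma numCycles_swap_mul_of_not_sameCycle [Fintype D] [DecidableEq D] (σ : Perm D) {x y : D}
    (hxy : x ≠ y) (h : ¬ σ.SameCycle x y) :
    numCycles (swap x y * σ) + 1 = numCycles σ := by
  have h' : (swap x y * σ).SameCycle x y := by
    by_contra hc
    exact h ((sameCycle_swap_mul_iff σ hxy).mpr hc)
  have e1 : extS (cycleSetoid (swap x y * σ)) x y = cycleSetoid (swap x y * σ) :=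
    extS_of_rel (h' : cycleSetoid (swap x y * σ) x y)
  have e2 := card_quot_extS_add_one (cycleSetoid σ) (h : ¬ cycleSetoid σ x y)
  have e3 := extS_cycle_eq σ x y
  rw [e1] at e3
  unfold numCycles
  rw [← e2, e3]

lemma numCycles_inv (f : Perm D) : numCycles f⁻¹ = numCycles f := by
  have : cycleSetoid f⁻¹ = cycleSetoid f :=
    Setoid.ext fun a b => Perm.sameCycle_inv
  unfold numCycles
  rw [this]

lemma numCycles_le_card [Fintype D] (f : Perm D) : numCycles f ≤ Fintype.card D := by
  rw [← Nat.card_eq_fintype_card]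
  exact Nat.card_le_card_of_surjective (Quotient.mk _) (fun q => Quotient.exists_rep q)

lemma numCycles_one [Fintype D] : numCycles (1 : Perm D) = Fintype.card D := by
  rw [numCycles, ← Nat.card_eq_fintype_card]
  apply Nat.card_congr
  refine ⟨Quotient.lift id (fun a b h => Perm.sameCycle_one.mp (h : (1 : Perm D).SameCycle a b)),
    Quotient.mk _, Quotient.ind fun a => rfl, fun a => rfl⟩

/-! ### Orbit counting lemmas -/

lemma orbit_rel_of_mem {G : Subgroup (Perm D)} {g : Perm D} (hg : g ∈ G) (a : D) :
    MulAction.orbitRel G D (g a) a := by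
  rw [MulAction.orbitRel_apply]
  exact ⟨⟨g, hg⟩, rfl⟩

lemma orbitRel_le_invSub {G : Subgroup (Perm D)} {e : Setoid D} (hG : G ≤ invSub e) :
    ∀ a b, MulAction.orbitRel G D a b → e a b := by
  intro a b h
  rw [MulAction.orbitRel_apply] at h
  obtain ⟨⟨g, hg⟩, rfl⟩ := h
  exact invSub_rel (hG hg) b

lemma orbitRel_mono {G K : Subgroup (Perm D)} (h : G ≤ K) :
    ∀ a b, MulAction.orbitRel G D a b → MulAction.orbitRel K D a b := by
  intro a b hab
  rw [MulAction.orbitRel_apply] at hab ⊢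
  obtain ⟨⟨g, hg⟩, rfl⟩ := hab
  exact ⟨⟨g, h hg⟩, rfl⟩

lemma card_orbit_le [Finite D] {G K : Subgroup (Perm D)} (h : G ≤ K) :
    Nat.card (Quotient (MulAction.orbitRel K D))
      ≤ Nat.card (Quotient (MulAction.orbitRel G D)) := by
  apply Nat.card_le_card_of_surjective
    (Quotient.map' id (fun a b hab => orbitRel_mono h a b hab))
  intro q
  obtain ⟨a, rfl⟩ := Quotient.exists_rep q
  exact ⟨⟦a⟧, rfl⟩

lemma orbit_ext [DecidableEq D] (S : Set (Perm D)) {x y : D} :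
    MulAction.orbitRel (Subgroup.closure (insert (swap x y) S)) D
      = extS (MulAction.orbitRel (Subgroup.closure S) D) x y := by
  set s := MulAction.orbitRel (Subgroup.closure S) D with hs
  set e := extS s x y with he
  apply Setoid.ext
  intro a b
  constructor
  · intro h
    have hle : Subgroup.closure (insert (swap x y) S) ≤ invSub e := by
      rw [Subgroup.closure_le]
      intro g hg
      rcases Set.mem_insert_iff.mp hg with rfl | hgS
      · rw [SetLike.mem_coe, mem_invSub_iff]
        intro a
        by_cases hax : a = x
        · rw [hax, swap_apply_left]
          exact Or.inr (Or.inr ⟨s.refl y, s.refl x⟩)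
        · by_cases hay : a = y
          · rw [hay, swap_apply_right]
            exact extS_rel_pair s x y
          · rw [swap_apply_of_ne_of_ne hax hay]
      · rw [SetLike.mem_coe, mem_invSub_iff]
        intro a
        exact Or.inl (orbit_rel_of_mem (Subgroup.subset_closure hgS) a)
    exact orbitRel_le_invSub hle a b h
  · intro h
    set L := Subgroup.closure (insert (swap x y) S) with hL
    set t := MulAction.orbitRel L D with ht
    have hmono : ∀ a b, s a b → t a b :=
      orbitRel_mono (Subgroup.closure_mono (Set.subset_insert _ _))
    have hpair : t x y := by
      have h0 : t ((swap x y) y) y :=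
        orbit_rel_of_mem (G := L) (Subgroup.subset_closure (Set.mem_insert (swap x y) S)) y
      rwa [swap_apply_right] at h0
    have h2 : extS t x y a b := extS_le (fun a b hab => Or.inl (hmono a b hab)) a b h
    rw [extS_of_rel hpair] at h2
    exact h2

end Aux
section Hypermap

variable {D : Type*} [Fintype D]

lemma facePerm_eq (a0 a1 : Perm D) : facePerm a0 a1 = (a0 * a1)⁻¹ := rfl

lemma numCycles_face (a0 a1 : Perm D) :
    numCycles (facePerm a0 a1) = numCycles (a0 * a1) := by
  rw [facePerm_eq, numCycles_inv]

lemma eulerChar_eq (a0 a1 : Perm D) :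
    eulerChar D a0 a1 =
      (numCycles a1 : ℤ) + numCycles a0 + numCycles (a0 * a1) - Fintype.card D := by
  rw [eulerChar, numCycles_face]

lemma numComponents_def (a0 a1 : Perm D) :
    numComponents a0 a1
      = Nat.card (Quotient (MulAction.orbitRel (Subgroup.closure {a0, a1}) D)) := rfl

lemma numComponents_one (a0 : Perm D) : numComponents a0 1 = numCycles a0 := by
  have h1 : Subgroup.closure {a0, (1 : Perm D)} = Subgroup.zpowers a0 := by
    apply le_antisymm
    · rw [Subgroup.closure_le]
      intro g hg
      rcases Set.mem_insert_iff.mp hg with rfl | hg1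
      · exact Subgroup.mem_zpowers g
      · rw [Set.mem_singleton_iff.mp hg1]
        exact one_mem _
    · exact Subgroup.zpowers_le.mpr (Subgroup.subset_closure (Set.mem_insert _ _))
  have h2 : MulAction.orbitRel (Subgroup.zpowers a0) D = cycleSetoid a0 := by
    apply Setoid.ext
    intro a b
    rw [MulAction.orbitRel_apply]
    constructor
    · rintro ⟨⟨g, hg⟩, rfl⟩
      obtain ⟨i, rfl⟩ := Subgroup.mem_zpowers_iff.mp hg
      show a0.SameCycle ((a0 ^ i) b) b
      exact Perm.SameCycle.symm ⟨i, rfl⟩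
    · rintro ⟨i, rfl⟩
      refine ⟨⟨a0 ^ (-i), Subgroup.zpow_mem _ (Subgroup.mem_zpowers a0) (-i)⟩, ?_⟩
      show (a0 ^ (-i)) ((a0 ^ i) a) = a
      simp [← Perm.mul_apply, ← zpow_add]
  rw [numComponents_def, h1, h2]
  rfl

lemma euler_base (a0 : Perm D) :
    eulerChar D a0 1 = 2 * numComponents a0 1 := by
  rw [eulerChar_eq, numCycles_one, mul_one, numComponents_one]
  push_cast
  ring

lemma euler_step [DecidableEq D] (a0 a1 : Perm D) (h : a1 ≠ 1) :
    ∃ a1' : Perm D, numCycles a1' = numCycles a1 + 1 ∧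
      ((2 ∣ eulerChar D a0 a1' ∧ eulerChar D a0 a1' ≤ 2 * numComponents a0 a1') →
        (2 ∣ eulerChar D a0 a1 ∧ eulerChar D a0 a1 ≤ 2 * numComponents a0 a1)) := by
  obtain ⟨x, hx⟩ : ∃ x, a1 x ≠ x := by
    by_contra hc
    push_neg at hc
    exact h (Equiv.ext hc)
  set y := a1 x with hy
  have hxy : x ≠ y := Ne.symm hx
  set a1' := swap x y * a1 with ha1'
  have ha1 : swap x y * a1' = a1 := swap_mul_self_mul x y a1
  have ha1'x : a1' x = x := by
    rw [ha1', Perm.mul_apply, ← hy, swap_apply_right]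
  have hnsc : ¬ a1'.SameCycle x y := by
    rintro ⟨i, hi⟩
    rw [Function.IsFixedPt.perm_zpow ha1'x i] at hi
    exact hxy hi
  have hc1 : numCycles a1 + 1 = numCycles a1' := by
    have h0 := numCycles_swap_mul_of_not_sameCycle a1' hxy hnsc
    rwa [ha1] at h0
  refine ⟨a1', hc1.symm, ?_⟩
  rintro ⟨hdvd, hle⟩
  have huw : a0 x ≠ a0 y := fun hc => hxy (a0.injective hc)
  have hface : a0 * a1 = swap (a0 x) (a0 y) * (a0 * a1') := by
    rw [swap_apply_apply, ← ha1]
    group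
  -- the three subgroups
  set K := Subgroup.closure ({a0, a1} : Set (Perm D)) with hK
  set H := Subgroup.closure ({a0, a1'} : Set (Perm D)) with hH
  set L := Subgroup.closure (insert (swap x y) ({a0, a1} : Set (Perm D))) with hL
  have hLsets : L = Subgroup.closure (insert (swap x y) ({a0, a1'} : Set (Perm D))) := by
    have hτR : swap x y ∈ Subgroup.closure (insert (swap x y) ({a0, a1'} : Set (Perm D))) :=
      Subgroup.subset_closure (Set.mem_insert _ _)
    have ha0R : a0 ∈ Subgroup.closure (insert (swap x y) ({a0, a1'} : Set (Perm D))) :=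
      Subgroup.subset_closure (by simp)
    have ha1'R : a1' ∈ Subgroup.closure (insert (swap x y) ({a0, a1'} : Set (Perm D))) :=
      Subgroup.subset_closure (by simp)
    have hτL : swap x y ∈ L := Subgroup.subset_closure (Set.mem_insert _ _)
    have ha0L : a0 ∈ L := Subgroup.subset_closure (by simp)
    have ha1L : a1 ∈ L := Subgroup.subset_closure (by simp)
    apply le_antisymm
    · rw [hL, Subgroup.closure_le]
      intro g hg
      rcases Set.mem_insert_iff.mp hg with rfl | hg2
      · exact hτR
      · rcases Set.mem_insert_iff.mp hg2 with rfl | hg3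
        · exact ha0R
        · rw [Set.mem_singleton_iff.mp hg3, ← ha1]
          exact mul_mem hτR ha1'R
    · rw [Subgroup.closure_le]
      intro g hg
      rcases Set.mem_insert_iff.mp hg with rfl | hg2
      · exact hτL
      · rcases Set.mem_insert_iff.mp hg2 with rfl | hg3
        · exact ha0L
        · rw [Set.mem_singleton_iff.mp hg3, ha1']
          exact mul_mem hτL ha1L
  have hKL : K ≤ L := Subgroup.closure_mono (Set.subset_insert _ _)
  have key2 : MulAction.orbitRel L D = extS (MulAction.orbitRel H D) x y := by
    rw [hLsets]
    exact orbit_ext {a0, a1'}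
  have hcLK : Nat.card (Quotient (MulAction.orbitRel L D)) ≤ numComponents a0 a1 := by
    rw [numComponents_def]
    exact card_orbit_le hKL
  by_cases hsc : (a0 * a1').SameCycle (a0 x) (a0 y)
  · -- split case: faces increase, components of H and L agree
    have hf : numCycles (a0 * a1) = numCycles (a0 * a1') + 1 := by
      rw [hface]
      exact numCycles_swap_mul_of_sameCycle _ huw hsc
    have hOH : MulAction.orbitRel H D x y := by
      have hρH : a0 * a1' ∈ H :=
        mul_mem (Subgroup.subset_closure (by simp)) (Subgroup.subset_closure (by simp))
      have hρinv : a0 * a1' ∈ invSub (MulAction.orbitRel H D) :=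
        mem_invSub_iff.mpr (fun a => orbit_rel_of_mem hρH a)
      have h1 : MulAction.orbitRel H D (a0 x) (a0 y) := sameCycle_rel hρinv hsc
      have h2 : MulAction.orbitRel H D (a0 x) x :=
        orbit_rel_of_mem (Subgroup.subset_closure (by simp)) x
      have h3 : MulAction.orbitRel H D (a0 y) y :=
        orbit_rel_of_mem (Subgroup.subset_closure (by simp)) y
      exact strans (ssymm h2) (strans h1 h3)
    have hcomp : numComponents a0 a1' = Nat.card (Quotient (MulAction.orbitRel L D)) := by
      rw [numComponents_def, key2, extS_of_rel hOH]
    have hE : eulerChar D a0 a1 = eulerChar D a0 a1' := by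
      rw [eulerChar_eq, eulerChar_eq, ← hc1, hf]
      push_cast
      ring
    have hcc : (numComponents a0 a1' : ℤ) ≤ numComponents a0 a1 := by
      exact_mod_cast hcomp.le.trans hcLK
    exact ⟨hE ▸ hdvd, by rw [hE]; linarith⟩
  · -- merge case: faces decrease, components may merge by one
    have hf : numCycles (a0 * a1) + 1 = numCycles (a0 * a1') := by
      rw [hface]
      exact numCycles_swap_mul_of_not_sameCycle _ huw hsc
    have hcomp : numComponents a0 a1'
        ≤ Nat.card (Quotient (MulAction.orbitRel L D)) + 1 := by
      rw [numComponents_def, key2]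
      by_cases hOH : MulAction.orbitRel H D x y
      · rw [extS_of_rel hOH, ← hH]
        exact Nat.le_succ _
      · exact le_of_eq (card_quot_extS_add_one _ hOH).symm
    have hE : eulerChar D a0 a1 = eulerChar D a0 a1' - 2 := by
      rw [eulerChar_eq, eulerChar_eq, ← hc1, ← hf]
      push_cast
      ring
    have hcc : (numComponents a0 a1' : ℤ)
        ≤ (Nat.card (Quotient (MulAction.orbitRel L D)) : ℤ) + 1 := by exact_mod_cast hcomp
    have hcc2 : (Nat.card (Quotient (MulAction.orbitRel L D)) : ℤ) ≤ numComponents a0 a1 := by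
      exact_mod_cast hcLK
    constructor
    · rw [hE]
      exact dvd_sub hdvd ⟨1, by ring⟩
    · rw [hE]
      linarith

lemma euler_main [DecidableEq D] :
    ∀ (m : ℕ) (a0 a1 : Perm D), Fintype.card D - numCycles a1 ≤ m →
      2 ∣ eulerChar D a0 a1 ∧ eulerChar D a0 a1 ≤ 2 * numComponents a0 a1 := by
  intro m
  induction m with
  | zero =>
    intro a0 a1 hm
    by_cases h1 : a1 = 1
    · subst h1
      rw [euler_base]
      exact ⟨dvd_mul_right 2 _, le_refl _⟩
    · exfalso
      obtain ⟨a1', hc1, _⟩ := euler_step a0 a1 h1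
      have h2 := numCycles_le_card a1'
      omega
  | succ m ih =>
    intro a0 a1 hm
    by_cases h1 : a1 = 1
    · subst h1
      rw [euler_base]
      exact ⟨dvd_mul_right 2 _, le_refl _⟩
    · obtain ⟨a1', hc1, himp⟩ := euler_step a0 a1 h1
      have h2 := numCycles_le_card a1'
      exact himp (ih a0 a1' (by omega))

end Hypermap

/-- The genus g = c - χ/2 is a nonnegative integer. -/
theorem genus_nonneg {D : Type*} [Fintype D] (a0 a1 : Perm D) :
    (2 : ℤ) ∣ eulerChar D a0 a1 ∧ 0 ≤ genusZ D a0 a1 := by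
  letI := Classical.decEq D
  obtain ⟨hdvd, hle⟩ := euler_main (Fintype.card D) a0 a1 (by omega)
  refine ⟨hdvd, ?_⟩
  obtain ⟨t, ht⟩ := hdvd
  rw [genusZ, ht, Int.mul_ediv_cancel_left _ (by norm_num : (2:ℤ) ≠ 0)]
  rw [ht] at hle
  linarith
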